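/- Let ρ : ℝⁿ × ℝⁿ → [0,∞) and suppose there exist finitely many maps h₁, ..., h_r : ℝⁿ → ℝⁿ and a constant C₀ ≥ 1 such that for all x, y, ρ(x,y) ≥ C₀⁻¹ · min_{1≤i≤r} |x - h_i(y)|. Suppose a measurable kernel K : ℝⁿ × ℝⁿ → ℝ satisfies |K(x,y) - K(x,z)| ≤ A|y-z|^δ / ρ(x,y)^{n+δ} whenever |y - z| ≤ ρ(x,y)/2, for some A, δ > 0. Then there is a constant C depending only on n, r, A, δ, C₀ such that for all y ≠ z, ∫_{{x : ρ(x,y) ≥ 2|y-z|}} |K(x,y) - K(x,z)| dx ≤ C. -/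

import Mathlib

open MeasureTheory

open Set Metric
open scoped ENNReal

section Aux
lemma aux_scale {n : ℕ} (p : ℝ) (c : EuclideanSpace ℝ (Fin n)) {R : ℝ} (hR : 0 < R) :
    ∫⁻ x : EuclideanSpace ℝ (Fin n), ENNReal.ofReal ((1 + ‖R⁻¹ • (x - c)‖) ^ (-p)) =
      ENNReal.ofReal (R ^ n) *
        ∫⁻ u : EuclideanSpace ℝ (Fin n), ENNReal.ofReal ((1 + ‖u‖) ^ (-p)) := by
  have hsm : Measurable fun v : EuclideanSpace ℝ (Fin n) => R⁻¹ • v :=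
    measurable_const_smul _
  have hmf : Measurable fun u : EuclideanSpace ℝ (Fin n) =>
      ENNReal.ofReal ((1 + ‖u‖) ^ (-p)) := by fun_prop
  have h1 : MeasurePreserving (fun x : EuclideanSpace ℝ (Fin n) => x - c) volume volume :=
    measurePreserving_sub_right volume c
  have step1 : ∫⁻ x : EuclideanSpace ℝ (Fin n), ENNReal.ofReal ((1 + ‖R⁻¹ • (x - c)‖) ^ (-p)) =
      ∫⁻ v : EuclideanSpace ℝ (Fin n), ENNReal.ofReal ((1 + ‖R⁻¹ • v‖) ^ (-p)) :=
by
    refine h1.lintegral_comp (f := fun v => ENNReal.ofReal ((1 + ‖R⁻¹ • v‖) ^ (-p))) ?_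
    fun_prop
  rw [step1]
  have hmap : Measure.map (fun v : EuclideanSpace ℝ (Fin n) => R⁻¹ • v) volume
      = ENNReal.ofReal |((R⁻¹) ^ Module.finrank ℝ (EuclideanSpace ℝ (Fin n)))⁻¹| • volume :=
    Measure.map_addHaar_smul volume (inv_ne_zero hR.ne')
  have step2 : ∫⁻ v : EuclideanSpace ℝ (Fin n), ENNReal.ofReal ((1 + ‖R⁻¹ • v‖) ^ (-p)) =
      ∫⁻ u, ENNReal.ofReal ((1 + ‖u‖) ^ (-p))
        ∂(Measure.map (fun v : EuclideanSpace ℝ (Fin n) => R⁻¹ • v) volume) := by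
    rw [lintegral_map hmf hsm]
  rw [step2, hmap, lintegral_smul_measure]
  congr 1
  rw [finrank_euclideanSpace_fin, ← inv_pow, inv_inv, abs_of_pos (by positivity)]

lemma real_case1 {n : ℕ} {A δ d ρ₀ : ℝ} (hA : 0 < A) (hδ : 0 < δ) (hd : 0 < d)
    (hρ : 2 * d ≤ ρ₀) :
    A * d ^ δ / ρ₀ ^ ((n : ℝ) + δ) ≤ A * 2 ^ (-((n : ℝ) + δ)) * d ^ (-(n : ℝ)) := by
  have h2d : (0:ℝ) < 2 * d := by linarith
  have hN : (0:ℝ) ≤ (n : ℝ) + δ := by positivity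
  have h1 : (2*d) ^ ((n:ℝ)+δ) ≤ ρ₀ ^ ((n:ℝ)+δ) := Real.rpow_le_rpow h2d.le hρ hN
  have h2 : A * d ^ δ / ρ₀ ^ ((n:ℝ)+δ) ≤ A * d ^ δ / (2*d) ^ ((n:ℝ)+δ) := by
    apply div_le_div_of_nonneg_left (by positivity) (by positivity) h1
  refine h2.trans_eq ?_
  rw [Real.mul_rpow (by norm_num) hd.le, Real.rpow_neg (by norm_num),
    Real.rpow_neg hd.le, Real.rpow_add hd, Real.rpow_natCast]
  field_simp

lemma real_case2 {n : ℕ} {A δ d C₀ ρ₀ t : ℝ} (hA : 0 < A) (hδ : 0 < δ) (hd : 0 < d)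
    (hC₀ : 1 ≤ C₀) (hρ1 : 2 * d ≤ ρ₀) (hρ2 : C₀⁻¹ * t ≤ ρ₀) (ht : 2 * C₀ * d < t) :
    A * d ^ δ / ρ₀ ^ ((n : ℝ) + δ) ≤
      A * 2 ^ (-(δ/2)) * C₀ ^ ((n : ℝ) + δ/2) * d ^ (δ/2) * t ^ (-((n : ℝ) + δ/2)) := by
  have hC₀0 : (0:ℝ) < C₀ := lt_of_lt_of_le one_pos hC₀
  have ht0 : 0 < t := lt_trans (by positivity) ht
  have hρ0 : 0 < ρ₀ := lt_of_lt_of_le (by positivity) hρ1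
  have hp : (0:ℝ) ≤ (n : ℝ) + δ/2 := by positivity
  have hsplit : ρ₀ ^ ((n:ℝ) + δ) = ρ₀ ^ ((n:ℝ) + δ/2) * ρ₀ ^ (δ/2) := by
    rw [← Real.rpow_add hρ0]; ring_nf
  have h1 : (C₀⁻¹ * t) ^ ((n:ℝ) + δ/2) ≤ ρ₀ ^ ((n:ℝ) + δ/2) :=
    Real.rpow_le_rpow (by positivity) hρ2 hp
  have h2 : (2*d) ^ (δ/2) ≤ ρ₀ ^ (δ/2) :=
    Real.rpow_le_rpow (by positivity) hρ1 (by positivity)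
  have hlow : (C₀⁻¹ * t) ^ ((n:ℝ) + δ/2) * (2*d) ^ (δ/2) ≤ ρ₀ ^ ((n:ℝ) + δ) := by
    rw [hsplit]
    exact mul_le_mul h1 h2 (by positivity) (by positivity)
  have h3 : A * d ^ δ / ρ₀ ^ ((n:ℝ) + δ) ≤
      A * d ^ δ / ((C₀⁻¹ * t) ^ ((n:ℝ) + δ/2) * (2*d) ^ (δ/2)) :=
    div_le_div_of_nonneg_left (by positivity) (by positivity) hlow
  refine h3.trans_eq ?_
  rw [Real.mul_rpow (by positivity) ht0.le, Real.mul_rpow (by norm_num) hd.le,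
    Real.rpow_neg (by norm_num : (0:ℝ) ≤ 2), Real.rpow_neg ht0.le,
    Real.inv_rpow hC₀0.le,
    show d ^ δ = d ^ (δ/2) * d ^ (δ/2) by rw [← Real.rpow_add hd]; ring_nf]
  field_simp

lemma real_case3 {n : ℕ} {δ d C₀ t κ : ℝ} (hκ : 0 < κ) (hδ : 0 < δ) (hd : 0 < d)
    (hC₀ : 1 ≤ C₀) (ht : 2 * C₀ * d < t) :
    κ * d ^ (δ/2) * t ^ (-((n : ℝ) + δ/2)) ≤
      κ * 2 ^ ((n : ℝ) + δ/2) * (2*C₀) ^ (-(δ/2)) * (2*C₀*d) ^ (-(n : ℝ)) *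
        (1 + (2*C₀*d)⁻¹ * t) ^ (-((n : ℝ) + δ/2)) := by
  have hC₀0 : (0:ℝ) < C₀ := lt_of_lt_of_le one_pos hC₀
  have hR0 : (0:ℝ) < 2*C₀*d := by positivity
  have ht0 : 0 < t := lt_trans hR0 ht
  have hq : 1 < (2*C₀*d)⁻¹ * t := by
    rw [inv_mul_eq_div, lt_div_iff₀ hR0, one_mul]; exact ht
  have hp : (0:ℝ) ≤ (n : ℝ) + δ/2 := by positivity
  -- 1 + u ≤ 2*u when u > 1
  have h1 : (1 + (2*C₀*d)⁻¹ * t) ≤ 2 * ((2*C₀*d)⁻¹ * t) := by linarith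
  have h2 : (2 * ((2*C₀*d)⁻¹ * t)) ^ (-((n:ℝ) + δ/2)) ≤
      (1 + (2*C₀*d)⁻¹ * t) ^ (-((n:ℝ) + δ/2)) :=
    Real.rpow_le_rpow_of_nonpos (by linarith) h1 (by linarith)
  set p : ℝ := (n:ℝ) + δ/2 with hpdef
  set R : ℝ := 2*C₀*d with hRdef
  set X : ℝ := (2 * (R⁻¹ * t)) ^ p with hXdef
  have hX : 0 < X := Real.rpow_pos_of_pos (by positivity) _
  have htp : (0:ℝ) < t ^ p := Real.rpow_pos_of_pos ht0 _
  have h2p : (0:ℝ) < (2:ℝ) ^ p := Real.rpow_pos_of_pos (by norm_num) _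
  have hRn : (0:ℝ) < R ^ ((n:ℝ)) := Real.rpow_pos_of_pos hR0 _
  have hRp : (0:ℝ) < R ^ p := Real.rpow_pos_of_pos hR0 _
  have h2C : (0:ℝ) < ((2:ℝ)*C₀) ^ (δ/2) := by positivity
  have e2u : X * R ^ p = 2 ^ p * t ^ p := by
    rw [hXdef, ← Real.mul_rpow (by positivity) hR0.le, ← Real.mul_rpow (by norm_num) ht0.le]
    congr 1
    field_simp
  have eR : R ^ p = R ^ ((n:ℝ)) * ((2*C₀) ^ (δ/2) * d ^ (δ/2)) := by
    rw [← Real.mul_rpow (by positivity) hd.le, ← Real.rpow_add hR0, hpdef]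
  have key : κ * d ^ (δ/2) * t ^ (-p) = κ * 2 ^ p * (2*C₀) ^ (-(δ/2)) * R ^ (-(n:ℝ)) * X⁻¹ := by
    rw [Real.rpow_neg ht0.le, Real.rpow_neg (by positivity : (0:ℝ) ≤ 2*C₀),
      Real.rpow_neg hR0.le]
    rw [eR] at e2u
    rw [Real.rpow_natCast R n] at e2u ⊢
    field_simp
    linear_combination e2u
  rw [key, show (1 + R⁻¹ * t) ^ (-p) = ((1 + R⁻¹*t) ^ p)⁻¹ from Real.rpow_neg (by positivity) _]
  have h1' : X⁻¹ ≤ ((1 + R⁻¹*t) ^ p)⁻¹ := by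
    apply inv_anti₀ (Real.rpow_pos_of_pos (by positivity) _)
    exact Real.rpow_le_rpow (by positivity) h1 hp
  exact mul_le_mul_of_nonneg_left h1' (by positivity)

end Aux


theorem stmt3 (n r : ℕ) (hn : 0 < n) (hr : 0 < r) (A δ C₀ : ℝ)
    (hA : 0 < A) (hδ : 0 < δ) (hC₀ : 1 ≤ C₀) :
    ∃ C : ℝ, 0 < C ∧
      ∀ (ρ : EuclideanSpace ℝ (Fin n) × EuclideanSpace ℝ (Fin n) → ℝ)
        (h : Fin r → EuclideanSpace ℝ (Fin n) → EuclideanSpace ℝ (Fin n))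
        (K : EuclideanSpace ℝ (Fin n) → EuclideanSpace ℝ (Fin n) → ℝ),
        Measurable (Function.uncurry K) →
        Measurable ρ →
        (∀ x y, 0 ≤ ρ (x, y)) →
        (∀ x y, C₀⁻¹ * (⨅ i : Fin r, ‖x - h i y‖) ≤ ρ (x, y)) →
        (∀ x y z, ‖y - z‖ ≤ ρ (x, y) / 2 →
          |K x y - K x z| ≤ A * ‖y - z‖ ^ δ / ρ (x, y) ^ ((n : ℝ) + δ)) →
        ∀ y z, y ≠ z →
          ∫⁻ x in {x | 2 * ‖y - z‖ ≤ ρ (x, y)}, ENNReal.ofReal |K x y - K x z| ≤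
            ENNReal.ofReal C := by
  have hC₀0 : (0:ℝ) < C₀ := lt_of_lt_of_le one_pos hC₀
  have hnpos : (0:ℝ) < n := by exact_mod_cast hn
  set p : ℝ := (n:ℝ) + δ/2 with hpdef
  set I : ℝ≥0∞ := ∫⁻ u : EuclideanSpace ℝ (Fin n), ENNReal.ofReal ((1 + ‖u‖) ^ (-p))
    with hIdef
  have hI : I < ⊤ := by
    apply finite_integral_one_add_norm
    rw [finrank_euclideanSpace_fin]
    simp only [hpdef]
    linarith
  set B : ℝ≥0∞ := volume (Metric.ball (0 : EuclideanSpace ℝ (Fin n)) 1) with hBdef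
  have hBlt : B < ⊤ := measure_ball_lt_top
  have hBpos : 0 < B.toReal :=
    ENNReal.toReal_pos (measure_ball_pos _ _ one_pos).ne' hBlt.ne
  set a₁ : ℝ := A * 2 ^ (-((n:ℝ) + δ)) * (2*C₀) ^ ((n:ℝ)) with ha₁def
  have ha₁ : 0 < a₁ := by positivity
  set κ : ℝ := A * 2 ^ (-(δ/2)) * C₀ ^ p with hκdef
  have hκ : 0 < κ := by positivity
  set κ₂ : ℝ := κ * 2 ^ p * (2*C₀) ^ (-(δ/2)) with hκ₂def
  have hκ₂ : 0 < κ₂ := by positivity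
  refine ⟨r * (a₁ * B.toReal) + r * (κ₂ * I.toReal), ?_, ?_⟩
  · apply add_pos_of_pos_of_nonneg
    · have : (0:ℝ) < r := by exact_mod_cast hr
      exact mul_pos this (mul_pos ha₁ hBpos)
    · positivity
  intro ρ h K hK hρ hρnn hmin hker y z hyz
  haveI : Nonempty (Fin r) := ⟨⟨0, hr⟩⟩
  set d : ℝ := ‖y - z‖ with hddef
  have hd : 0 < d := by
    rw [hddef]; exact norm_pos_iff.mpr (sub_ne_zero.mpr hyz)
  set R : ℝ := 2*C₀*d with hRdef
  have hR0 : 0 < R := by positivity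
  set c₁ : ℝ := A * 2 ^ (-((n:ℝ) + δ)) * d ^ (-(n:ℝ)) with hc₁def
  have hc₁ : 0 < c₁ := by positivity
  -- the two dominating functions
  set F₁ : EuclideanSpace ℝ (Fin n) → ℝ≥0∞ := fun x =>
    ∑ i : Fin r, Set.indicator (Metric.closedBall (h i y) R)
      (fun _ => ENNReal.ofReal c₁) x with hF₁def
  set F₂ : EuclideanSpace ℝ (Fin n) → ℝ≥0∞ := fun x =>
    ∑ i : Fin r, Set.indicator {x | R < ‖x - h i y‖}
      (fun x => ENNReal.ofReal (κ * d ^ (δ/2) * ‖x - h i y‖ ^ (-p))) x with hF₂def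
  have hSmeas : MeasurableSet {x : EuclideanSpace ℝ (Fin n) | 2 * d ≤ ρ (x, y)} := by
    have hm : Measurable fun x : EuclideanSpace ℝ (Fin n) => ρ (x, y) :=
      hρ.comp (measurable_id.prodMk measurable_const)
    exact measurableSet_le measurable_const hm
  have hsetmeas : ∀ i : Fin r,
      MeasurableSet {x : EuclideanSpace ℝ (Fin n) | R < ‖x - h i y‖} := by
    intro i
    have hm : Measurable fun x : EuclideanSpace ℝ (Fin n) => ‖x - h i y‖ := by fun_prop
    exact measurableSet_lt measurable_const hm
  have hF₂imeas : ∀ i : Fin r, Measurable fun x : EuclideanSpace ℝ (Fin n) =>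
      ENNReal.ofReal (κ * d ^ (δ/2) * ‖x - h i y‖ ^ (-p)) := by
    intro i
    have hm : Measurable fun x : EuclideanSpace ℝ (Fin n) => x - h i y := by fun_prop
    fun_prop
  -- pointwise bound on the set
  have key : ∀ x ∈ {x : EuclideanSpace ℝ (Fin n) | 2 * d ≤ ρ (x, y)},
      ENNReal.ofReal |K x y - K x z| ≤ F₁ x + F₂ x := by
    intro x hx
    simp only [Set.mem_setOf_eq] at hx
    have hρpos : 0 < ρ (x, y) := lt_of_lt_of_le (by positivity) hx
    have hkb : |K x y - K x z| ≤ A * d ^ δ / ρ (x, y) ^ ((n:ℝ) + δ) := by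
      rw [hddef]
      exact hker x y z (by rw [← hddef]; linarith)
    obtain ⟨i₀, hi₀⟩ := exists_eq_ciInf_of_finite (f := fun i : Fin r => ‖x - h i y‖)
    have hmin' : C₀⁻¹ * ‖x - h i₀ y‖ ≤ ρ (x, y) := by
      rw [hi₀]; exact hmin x y
    by_cases hcase : ‖x - h i₀ y‖ ≤ R
    · -- near a singularity: use the crude bound
      have hb : ENNReal.ofReal |K x y - K x z| ≤ ENNReal.ofReal c₁ := by
        apply ENNReal.ofReal_le_ofReal
        exact hkb.trans (real_case1 hA hδ hd hx)
      have hxmem : x ∈ Metric.closedBall (h i₀ y) R := by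
        rw [Metric.mem_closedBall, dist_eq_norm]; exact hcase
      have hone : ENNReal.ofReal c₁ ≤ F₁ x := by
        rw [hF₁def]
        have := Finset.single_le_sum
          (f := fun i : Fin r => Set.indicator (Metric.closedBall (h i y) R)
            (fun _ => ENNReal.ofReal c₁) x)
          (fun i _ => zero_le) (Finset.mem_univ i₀)
        simpa [Set.indicator_of_mem hxmem] using this
      exact le_trans (hb.trans hone) le_self_add
    · push_neg at hcase
      have hb : ENNReal.ofReal |K x y - K x z| ≤
          ENNReal.ofReal (κ * d ^ (δ/2) * ‖x - h i₀ y‖ ^ (-p)) := by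
        apply ENNReal.ofReal_le_ofReal
        refine hkb.trans ?_
        have := real_case2 (n := n) hA hδ hd hC₀ hx hmin' (by rw [← hRdef]; exact hcase)
        simpa [hκdef, hpdef, mul_assoc] using this
      have hxmem : x ∈ {x : EuclideanSpace ℝ (Fin n) | R < ‖x - h i₀ y‖} := hcase
      have hone : ENNReal.ofReal (κ * d ^ (δ/2) * ‖x - h i₀ y‖ ^ (-p)) ≤ F₂ x := by
        rw [hF₂def]
        have := Finset.single_le_sum
          (f := fun i : Fin r => Set.indicator {x | R < ‖x - h i y‖}
            (fun x => ENNReal.ofReal (κ * d ^ (δ/2) * ‖x - h i y‖ ^ (-p))) x)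
          (fun i _ => zero_le) (Finset.mem_univ i₀)
        simpa [Set.indicator_of_mem hxmem] using this
      exact le_trans (hb.trans hone) le_add_self
  -- bound each piece
  have hF₁meas : Measurable F₁ := by
    apply Finset.measurable_sum
    intro i _
    exact measurable_const.indicator measurableSet_closedBall
  have boundF₁ : ∫⁻ x, F₁ x ≤ ENNReal.ofReal (r * (a₁ * B.toReal)) := by
    rw [hF₁def, lintegral_finset_sum _
      (fun i _ => measurable_const.indicator measurableSet_closedBall)]
    have heach : ∀ i : Fin r,
        (∫⁻ x, Set.indicator (Metric.closedBall (h i y) R)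
          (fun _ => ENNReal.ofReal c₁) x) = ENNReal.ofReal (a₁ * B.toReal) := by
      intro i
      rw [lintegral_indicator measurableSet_closedBall, setLIntegral_const,
        Measure.addHaar_closedBall volume (h i y) hR0.le, finrank_euclideanSpace_fin]
      rw [← hBdef, ← mul_assoc, ← ENNReal.ofReal_mul hc₁.le]
      have hcr : c₁ * R ^ n = a₁ := by
        rw [hc₁def, ha₁def, hRdef, mul_pow, ← Real.rpow_natCast d n,
          ← Real.rpow_natCast (2*C₀) n]
        have hdd : d ^ (-(n:ℝ)) * d ^ ((n:ℝ)) = 1 := by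
          rw [← Real.rpow_add hd]; simp
        calc A * 2 ^ (-((n:ℝ) + δ)) * d ^ (-(n:ℝ)) * ((2*C₀) ^ ((n:ℝ)) * d ^ ((n:ℝ)))
            = A * 2 ^ (-((n:ℝ) + δ)) * (2*C₀) ^ ((n:ℝ)) * (d ^ (-(n:ℝ)) * d ^ ((n:ℝ))) := by
              ring
          _ = A * 2 ^ (-((n:ℝ) + δ)) * (2*C₀) ^ ((n:ℝ)) := by rw [hdd, mul_one]
      rw [hcr, ENNReal.ofReal_mul ha₁.le, ENNReal.ofReal_toReal hBlt.ne]
    rw [Finset.sum_congr rfl (fun i _ => heach i)]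
    rw [Finset.sum_const, Finset.card_univ, Fintype.card_fin, nsmul_eq_mul]
    rw [← ENNReal.ofReal_natCast r, ← ENNReal.ofReal_mul (by positivity)]
  have boundF₂ : ∫⁻ x, F₂ x ≤ ENNReal.ofReal (r * (κ₂ * I.toReal)) := by
    rw [hF₂def, lintegral_finset_sum _
      (fun i _ => ((hF₂imeas i).indicator (hsetmeas i)))]
    have heach : ∀ i : Fin r,
        (∫⁻ x, Set.indicator {x | R < ‖x - h i y‖}
          (fun x => ENNReal.ofReal (κ * d ^ (δ/2) * ‖x - h i y‖ ^ (-p))) x) ≤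
        ENNReal.ofReal (κ₂ * I.toReal) := by
      intro i
      rw [lintegral_indicator (hsetmeas i)]
      have hmono : ∫⁻ x in {x | R < ‖x - h i y‖},
          ENNReal.ofReal (κ * d ^ (δ/2) * ‖x - h i y‖ ^ (-p)) ≤
          ∫⁻ x in {x | R < ‖x - h i y‖},
          ENNReal.ofReal (κ₂ * R ^ (-(n:ℝ)) * (1 + ‖R⁻¹ • (x - h i y)‖) ^ (-p)) := by
        apply setLIntegral_mono' (hsetmeas i)
        intro x hx
        simp only [Set.mem_setOf_eq] at hx
        apply ENNReal.ofReal_le_ofReal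
        have hns : ‖R⁻¹ • (x - h i y)‖ = R⁻¹ * ‖x - h i y‖ := by
          rw [norm_smul, Real.norm_eq_abs, abs_of_pos (by positivity)]
        rw [hns]
        have := real_case3 (n := n) hκ hδ hd hC₀ (by rw [← hRdef]; exact hx)
        simpa [hκ₂def, hRdef, hpdef, mul_assoc] using this
      refine hmono.trans ?_
      refine (setLIntegral_le_lintegral _ _).trans ?_
      have hconst : ∀ x : EuclideanSpace ℝ (Fin n),
          ENNReal.ofReal (κ₂ * R ^ (-(n:ℝ)) * (1 + ‖R⁻¹ • (x - h i y)‖) ^ (-p)) =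
          ENNReal.ofReal (κ₂ * R ^ (-(n:ℝ))) *
            ENNReal.ofReal ((1 + ‖R⁻¹ • (x - h i y)‖) ^ (-p)) := by
        intro x
        rw [← ENNReal.ofReal_mul (by positivity)]
      simp_rw [hconst]
      rw [lintegral_const_mul _ (by
        have hm : Measurable fun x : EuclideanSpace ℝ (Fin n) => R⁻¹ • (x - h i y) := by
          fun_prop
        fun_prop)]
      rw [aux_scale p (h i y) hR0, ← hIdef]
      rw [← mul_assoc, ← ENNReal.ofReal_mul (by positivity)]
      have hkk : κ₂ * R ^ (-(n:ℝ)) * R ^ n = κ₂ := by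
        rw [← Real.rpow_natCast R n, mul_assoc, ← Real.rpow_add hR0]
        simp
      rw [hkk, ENNReal.ofReal_mul hκ₂.le, ENNReal.ofReal_toReal hI.ne]
    calc (∑ i : Fin r, ∫⁻ x, Set.indicator {x | R < ‖x - h i y‖}
          (fun x => ENNReal.ofReal (κ * d ^ (δ/2) * ‖x - h i y‖ ^ (-p))) x)
        ≤ ∑ _i : Fin r, ENNReal.ofReal (κ₂ * I.toReal) :=
          Finset.sum_le_sum (fun i _ => heach i)
      _ = ENNReal.ofReal (r * (κ₂ * I.toReal)) := by
          rw [Finset.sum_const, Finset.card_univ, Fintype.card_fin, nsmul_eq_mul,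
            ← ENNReal.ofReal_natCast r, ← ENNReal.ofReal_mul (by positivity)]
  -- assemble
  calc ∫⁻ x in {x | 2 * ‖y - z‖ ≤ ρ (x, y)}, ENNReal.ofReal |K x y - K x z|
      ≤ ∫⁻ x in {x | 2 * d ≤ ρ (x, y)}, (F₁ x + F₂ x) := by
        rw [hddef]
        exact setLIntegral_mono' hSmeas key
    _ ≤ ∫⁻ x, (F₁ x + F₂ x) := setLIntegral_le_lintegral _ _
    _ = (∫⁻ x, F₁ x) + ∫⁻ x, F₂ x := lintegral_add_left hF₁meas _
    _ ≤ ENNReal.ofReal (r * (a₁ * B.toReal)) + ENNReal.ofReal (r * (κ₂ * I.toReal)) :=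
        add_le_add boundF₁ boundF₂
    _ = ENNReal.ofReal (r * (a₁ * B.toReal) + r * (κ₂ * I.toReal)) := by
        rw [← ENNReal.ofReal_add (by positivity) (by positivity)]
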